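/- Let Q_0 be a partition whose parts are pairwise distinct integers each of size at least 2, let M be the sum of Q_0, let N ≥ M, and set r = N − M and Q_can = Q_0 together with r parts equal to 1. Assume moreover that r ≠ 2 or that Q_0 has no part equal to 2. Then Q_can is the unique maximizer of R among partitions of N containing Q_0 as a subpartition: for every partition Q ≠ Q_can of N containing Q_0, one has R(Q) < R(Q_can). -/

import Mathlib

/-- The rank of a shape datum `Δ = ((T₁,d₁),…,(T_k,d_k))`: `N = Σ Tᵢ·dᵢ`. -/
def rankShape (Δ : List (ℕ × ℕ)) : ℕ := (Δ.map (fun p => p.1 * p.2)).sum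

/-- The invariant `R̄(Δ) = (1/2)(N² + Σ Tᵢ²·dᵢ)`. -/
def Rbar (Δ : List (ℕ × ℕ)) : ℚ :=
  ((rankShape Δ : ℚ) ^ 2 + (Δ.map (fun p => (p.1 : ℚ) ^ 2 * p.2)).sum) / 2

/-- The correction term subtracted from `R̄` for a single block `(T,d)`. -/
def corr (p : ℕ × ℕ) : ℚ :=
  if p.1 = 1 then ((p.2 : ℚ) ^ 2 + p.2) / 2 - 1
  else if p.1 = 2 then 3 * p.2 - 3
  else if p.1 = 3 ∧ 1 < p.2 then 9 * p.2 - ((4 + 1 / 10 ^ 100) * p.2 + 5)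
  else 0

/-- The invariant `R(Δ)`. -/
def Rshape (Δ : List (ℕ × ℕ)) : ℚ := Rbar Δ - (Δ.map corr).sum

/-- `R` of a partition `Q`: apply `Rshape` to the shape datum `((r₁,a₁),…,(r_m,a_m))`
where `a₁,…,a_m` are the distinct parts of `Q` and `rᵢ` their multiplicities. -/
noncomputable def RQ (Q : Multiset ℕ) : ℚ :=
  Rshape (Q.toFinset.toList.map (fun a => (Q.count a, a)))

/-- Per-block contribution to `R`. -/
def g (m a : ℕ) : ℚ := (m : ℚ) ^ 2 * a / 2 - corr (m, a)

lemma g_zero (a : ℕ) : g 0 a = 0 := by simp [g, corr]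

lemma g_one_right (r : ℕ) : g r 1 = (r : ℚ) ^ 2 / 2 := by
  match r with
  | 0 => simp [g, corr]
  | 1 => norm_num [g, corr]
  | 2 => norm_num [g, corr]
  | (n+3) => simp [g, corr]

lemma hε : (0:ℚ) < 1 / 10 ^ 100 ∧ (1:ℚ) / 10 ^ 100 ≤ 1 / 2 := by norm_num

lemma key_out (m a : ℕ) (hm : 1 ≤ m) (ha : 2 ≤ a) :
    g m a < ((m * a : ℕ) : ℚ) ^ 2 / 2 := by
  have ha' : (2:ℚ) ≤ a := by exact_mod_cast ha
  match m with
  | 1 => simp only [g, corr]; norm_num; nlinarith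
  | 2 => simp only [g, corr]; norm_num; nlinarith
  | 3 =>
    simp only [g, corr]
    rw [if_neg (by norm_num), if_neg (by norm_num), if_pos ⟨trivial, by omega⟩]
    push_cast
    nlinarith [hε.1, hε.2]
  | (n+4) =>
    simp only [g, corr]
    rw [if_neg (by omega), if_neg (by omega), if_neg (by omega)]
    push_cast
    have hn : (4:ℚ) ≤ (n:ℚ) + 4 := by
      have : (0:ℚ) ≤ n := by positivity
      linarith
    nlinarith

lemma g_one_left (a : ℕ) : g 1 a = 1 - (a:ℚ)^2/2 := by
  simp only [g, corr]; norm_num; ring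

lemma key_in_le (m a : ℕ) (hm : 2 ≤ m) (ha : 2 ≤ a) :
    g m a - g 1 a ≤ (((m - 1) * a : ℕ) : ℚ) ^ 2 / 2 := by
  have ha' : (2:ℚ) ≤ a := by exact_mod_cast ha
  rw [g_one_left]
  match m, hm with
  | 2, _ => simp only [g, corr]; norm_num; nlinarith
  | 3, _ =>
    simp only [g, corr]
    rw [if_neg (by omega), if_neg (by omega), if_pos ⟨trivial, by omega⟩]
    push_cast [Nat.sub_zero]
    nlinarith [hε.1, hε.2]
  | (n+4), _ =>
    simp only [g, corr]
    rw [if_neg (by omega), if_neg (by omega), if_neg (by omega)]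
    have : (n + 4 - 1) = n + 3 := by omega
    rw [this]
    push_cast
    have hn : (0:ℚ) ≤ n := by positivity
    have hb : (0:ℚ) ≤ (a:ℚ) - 2 := by linarith
    nlinarith [mul_nonneg hn hb, mul_nonneg (mul_nonneg hn hn) hb, mul_nonneg (mul_nonneg hn hb) hb, mul_nonneg hb hb, mul_nonneg hn hn, mul_nonneg (mul_nonneg hb hb) hb]

lemma key_in (m a : ℕ) (hm : 2 ≤ m) (ha : 2 ≤ a) (hne : m ≠ 2 ∨ a ≠ 2) :
    g m a - g 1 a < (((m - 1) * a : ℕ) : ℚ) ^ 2 / 2 := by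
  have ha' : (2:ℚ) ≤ a := by exact_mod_cast ha
  rw [g_one_left]
  match m, hm with
  | 2, _ =>
    have ha2 : a ≠ 2 := hne.resolve_left (by omega)
    have ha3 : (3:ℚ) ≤ a := by exact_mod_cast (by omega : 3 ≤ a)
    simp only [g, corr]; norm_num; nlinarith
  | 3, _ =>
    simp only [g, corr]
    rw [if_neg (by omega), if_neg (by omega), if_pos ⟨trivial, by omega⟩]
    push_cast [Nat.sub_zero]
    nlinarith [hε.1, hε.2]
  | (n+4), _ =>
    simp only [g, corr]
    rw [if_neg (by omega), if_neg (by omega), if_neg (by omega)]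
    have : (n + 4 - 1) = n + 3 := by omega
    rw [this]
    push_cast
    have hn : (0:ℚ) ≤ n := by positivity
    have hb : (0:ℚ) ≤ (a:ℚ) - 2 := by linarith
    nlinarith [mul_nonneg hn hb, mul_nonneg (mul_nonneg hn hn) hb, mul_nonneg (mul_nonneg hn hb) hb, mul_nonneg hb hb, mul_nonneg hn hn, mul_nonneg (mul_nonneg hb hb) hb]

/-- Combined per-block estimate. -/
lemma key_combined (m c a : ℕ) (ha : 2 ≤ a) (hc : c ≤ 1) (hcm : c ≤ m) (hm : 1 ≤ m) :
    g m a - (c:ℚ) * g 1 a ≤ ((m * a - c * a : ℕ) : ℚ) ^ 2 / 2 ∧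
    (m ≠ c → ¬(c = 1 ∧ m = 2 ∧ a = 2) →
      g m a - (c:ℚ) * g 1 a < ((m * a - c * a : ℕ) : ℚ) ^ 2 / 2) := by
  interval_cases c
  · simp only [Nat.cast_zero, zero_mul, sub_zero, Nat.mul_zero, Nat.zero_mul]
    have h := key_out m a hm ha
    exact ⟨le_of_lt h, fun _ _ => h⟩
  · have he : m * a - 1 * a = (m - 1) * a := by
      rw [Nat.sub_mul, one_mul]
    rw [he, Nat.cast_one, one_mul]
    rcases Nat.lt_or_ge m 2 with h1 | h1
    · have hm1 : m = 1 := by omega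
      subst hm1
      simp only [sub_self, Nat.sub_self, Nat.zero_mul, Nat.cast_zero]
      norm_num
    · refine ⟨key_in_le m a h1 ha, fun _ hnc => ?_⟩
      have : m ≠ 2 ∨ a ≠ 2 := by
        by_contra hcon
        push_neg at hcon
        exact hnc ⟨rfl, hcon.1, hcon.2⟩
      exact key_in m a h1 ha this

lemma count_mul_sum (Q : Multiset ℕ) : ∑ a ∈ Q.toFinset, Q.count a * a = Q.sum := by
  conv_rhs => rw [← Multiset.map_id Q]
  rw [Finset.sum_multiset_map_count]
  simp [smul_eq_mul]

lemma RQ_eq (Q : Multiset ℕ) :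
    RQ Q = (Q.sum : ℚ) ^ 2 / 2 + ∑ a ∈ Q.toFinset, g (Q.count a) a := by
  unfold RQ Rshape Rbar rankShape
  rw [List.map_map, List.map_map, List.map_map]
  rw [show ((fun p : ℕ × ℕ => p.1 * p.2) ∘ fun a => (Q.count a, a)) =
      fun a => Q.count a * a from rfl]
  rw [show ((fun p : ℕ × ℕ => (p.1 : ℚ) ^ 2 * p.2) ∘ fun a => (Q.count a, a)) =
      fun a => (Q.count a : ℚ) ^ 2 * a from rfl]
  rw [show (corr ∘ fun a => (Q.count a, a)) = fun a => corr (Q.count a, a) from rfl]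
  rw [Finset.sum_map_toList, Finset.sum_map_toList, Finset.sum_map_toList, count_mul_sum]
  unfold g
  rw [Finset.sum_sub_distrib, ← Finset.sum_div]
  ring

lemma sum_split_one {M : Type*} [AddCommMonoid M] (Q : Multiset ℕ) (f : ℕ → M) (y : M)
    (hy : f 1 = y) (h0 : Q.count 1 = 0 → y = 0) :
    ∑ a ∈ Q.toFinset, f a = y + ∑ a ∈ Q.toFinset.erase 1, f a := by
  by_cases h : 1 ∈ Q.toFinset
  · rw [← hy, Finset.add_sum_erase _ f h]
  · rw [Finset.erase_eq_of_notMem h,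
      h0 (Multiset.count_eq_zero.2 (fun hm => h (Multiset.mem_toFinset.2 hm))), zero_add]

lemma nat_sum_sq_le (s : Finset ℕ) (f : ℕ → ℕ) :
    ∑ a ∈ s, (f a) ^ 2 ≤ (∑ a ∈ s, f a) ^ 2 := by
  induction s using Finset.cons_induction with
  | empty => simp
  | cons a s ha ih =>
    rw [Finset.sum_cons, Finset.sum_cons]
    calc f a ^ 2 + ∑ x ∈ s, f x ^ 2 ≤ f a ^ 2 + (∑ x ∈ s, f x) ^ 2 := by omega
      _ ≤ (f a + ∑ x ∈ s, f x) ^ 2 := by ring_nf; omega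

/-- Let `Q₀` be a partition with pairwise distinct parts, each of size at least 2,
`M` its sum, `N ≥ M`, `r = N − M` and `Q_can = Q₀ + {1,…,1}` (`r` ones).  Assume
`r ≠ 2` or `Q₀` has no part equal to `2`.  Then `Q_can` is the unique maximizer of
`R` among partitions of `N` containing `Q₀` as a subpartition. -/
theorem RQ_lt_RQ_can_of_ne (Q₀ : Multiset ℕ) (hnd : Q₀.Nodup) (h2 : ∀ a ∈ Q₀, 2 ≤ a)
    (N : ℕ) (hN : Q₀.sum ≤ N)
    (hside : N - Q₀.sum ≠ 2 ∨ 2 ∉ Q₀)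
    (Q : Multiset ℕ) (hpos : ∀ a ∈ Q, 0 < a) (hsum : Q.sum = N) (hsub : Q₀ ≤ Q)
    (hne : Q ≠ Q₀ + Multiset.replicate (N - Q₀.sum) 1) :
    RQ Q < RQ (Q₀ + Multiset.replicate (N - Q₀.sum) 1) := by
  set M := Q₀.sum with hM
  set r := N - M with hr
  set Qc := Q₀ + Multiset.replicate r 1 with hQc
  have h1Q0 : (1:ℕ) ∉ Q₀ := fun h => by have := h2 1 h; omega
  have hcQc : ∀ b, Qc.count b = Q₀.count b + if b = 1 then r else 0 := by
    intro b; rw [hQc, Multiset.count_add, Multiset.count_replicate]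
    congr 1
    by_cases hb : b = 1 <;> simp [hb, eq_comm]
  have hc1Qc : Qc.count 1 = r := by
    rw [hcQc 1, if_pos rfl, Multiset.count_eq_zero.2 h1Q0, zero_add]
  have hQcsum : Qc.sum = N := by
    rw [hQc, Multiset.sum_add, Multiset.sum_replicate, smul_eq_mul, mul_one, ← hM]
    omega
  have hc01 : ∀ a, Q₀.count a ≤ 1 := fun a => Multiset.nodup_iff_count_le_one.1 hnd a
  have hcount_le : ∀ a, Q₀.count a ≤ Q.count a := fun a => Multiset.le_iff_count.1 hsub a
  -- the erased finsets
  set S2 := Q.toFinset.erase 1 with hS2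
  set T0 := Q₀.toFinset with hT0
  have hQcT : Qc.toFinset.erase 1 = T0 := by
    ext b
    simp only [Finset.mem_erase, hQc, Multiset.toFinset_add, Finset.mem_union,
      Multiset.mem_toFinset, Multiset.mem_replicate, hT0]
    constructor
    · rintro ⟨hb1, hb | ⟨-, rfl⟩⟩
      · exact hb
      · exact absurd rfl hb1
    · intro hb
      exact ⟨fun h => by subst h; exact h1Q0 hb, Or.inl hb⟩
  have hT0S2 : T0 ⊆ S2 := by
    intro a ha
    rw [hT0, Multiset.mem_toFinset] at ha
    rw [hS2, Finset.mem_erase, Multiset.mem_toFinset]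
    exact ⟨by have := h2 a ha; omega, Multiset.mem_of_le hsub ha⟩
  have haS2 : ∀ a ∈ S2, 2 ≤ a := by
    intro a ha
    rw [hS2, Finset.mem_erase, Multiset.mem_toFinset] at ha
    have := hpos a ha.2
    omega
  have hmemS2 : ∀ a ∈ S2, 1 ≤ Q.count a := by
    intro a ha
    rw [hS2, Finset.mem_erase, Multiset.mem_toFinset] at ha
    exact Multiset.one_le_count_iff_mem.2 ha.2
  -- RQ formulas
  set r₁ := Q.count 1 with hr₁
  have hRQc : RQ Qc = (N:ℚ)^2/2 + ((r:ℚ)^2/2 + ∑ a ∈ T0, g 1 a) := by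
    rw [RQ_eq, hQcsum,
      sum_split_one Qc (fun a => g (Qc.count a) a) ((r:ℚ)^2/2)
        (by show g (Qc.count 1) 1 = (r:ℚ)^2/2; rw [hc1Qc, g_one_right])
        (fun h => by rw [hc1Qc] at h; rw [h]; norm_num),
      hQcT]
    congr 2
    apply Finset.sum_congr rfl
    intro a ha
    rw [hT0, Multiset.mem_toFinset] at ha
    rw [hcQc a, if_neg (by have := h2 a ha; omega), add_zero,
      Multiset.count_eq_one_of_mem hnd ha]
  have hRQ : RQ Q = (N:ℚ)^2/2 + ((r₁:ℚ)^2/2 + ∑ a ∈ S2, g (Q.count a) a) := by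
    rw [RQ_eq, hsum,
      sum_split_one Q (fun a => g (Q.count a) a) ((r₁:ℚ)^2/2)
        (by show g (Q.count 1) 1 = (r₁:ℚ)^2/2; rw [← hr₁, g_one_right])
        (fun h => by rw [← hr₁] at h; rw [h]; norm_num)]
  rw [hRQ, hRQc]
  have hM_T0 : ∑ a ∈ T0, Q₀.count a * a = M := count_mul_sum Q₀
  -- rewrite the T0-sum as an S2-sum
  have hT0sum : ∑ a ∈ T0, g 1 a = ∑ a ∈ S2, (Q₀.count a : ℚ) * g 1 a := by
    rw [← Finset.sum_subset hT0S2 (fun x _ hx => by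
      rw [Multiset.count_eq_zero.2 (fun hm => hx (Multiset.mem_toFinset.2 hm)),
        Nat.cast_zero, zero_mul])]
    apply Finset.sum_congr rfl
    intro a ha
    rw [hT0, Multiset.mem_toFinset] at ha
    rw [Multiset.count_eq_one_of_mem hnd ha, Nat.cast_one, one_mul]
  rw [hT0sum]
  -- reduce to the core sum inequality
  rw [← sub_pos]
  rw [show ∀ A B C D : ℚ, (N:ℚ)^2/2 + (C + B) - ((N:ℚ)^2/2 + (D + A)) = (C + B) - (D + A)
    from fun A B C D => by ring]
  have hsplit : ∑ a ∈ S2, (g (Q.count a) a - (Q₀.count a:ℚ) * g 1 a)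
      = ∑ a ∈ S2, g (Q.count a) a - ∑ a ∈ S2, (Q₀.count a:ℚ) * g 1 a :=
    Finset.sum_sub_distrib _ _
  suffices hcore : ∑ a ∈ S2, (g (Q.count a) a - (Q₀.count a:ℚ) * g 1 a)
      < (r:ℚ)^2/2 - (r₁:ℚ)^2/2 by
    rw [hsplit] at hcore
    linarith
  -- e and E
  set e : ℕ → ℕ := fun a => Q.count a * a - Q₀.count a * a with he
  set E := ∑ a ∈ S2, e a with hE
  have heA : ∀ a ∈ S2, e a + Q₀.count a * a = Q.count a * a := by
    intro a _
    exact Nat.sub_add_cancel (Nat.mul_le_mul_right a (hcount_le a))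
  have hS2count : r₁ + ∑ a ∈ S2, Q.count a * a = N := by
    have h := sum_split_one Q (fun a => Q.count a * a) r₁
      (by show Q.count 1 * 1 = r₁; rw [mul_one])
      (fun h => by rw [← hr₁] at h; exact h)
    rw [count_mul_sum, hsum] at h
    have h' : N = r₁ + ∑ a ∈ S2, Multiset.count a Q * a := h
    omega
  have hMsum : ∑ a ∈ S2, Q₀.count a * a = M := by
    rw [← hM_T0]
    exact (Finset.sum_subset hT0S2 (fun x _ hx => by
      rw [Multiset.count_eq_zero.2 (fun hm => hx (Multiset.mem_toFinset.2 hm)), zero_mul])).symm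
  have hEN : E + M + r₁ = N := by
    have : ∑ a ∈ S2, (e a + Q₀.count a * a) = ∑ a ∈ S2, Q.count a * a :=
      Finset.sum_congr rfl heA
    rw [Finset.sum_add_distrib, hMsum] at this
    omega
  have hrE : r = E + r₁ := by omega
  -- per-element bounds
  have hkey_le : ∀ a ∈ S2, g (Q.count a) a - (Q₀.count a:ℚ) * g 1 a ≤ ((e a : ℕ) : ℚ)^2/2 :=
    fun a ha =>
      (key_combined (Q.count a) (Q₀.count a) a (haS2 a ha) (hc01 a) (hcount_le a)
        (hmemS2 a ha)).1
  have hkey_char : ∀ a ∈ S2, e a ≠ 0 →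
      g (Q.count a) a - (Q₀.count a:ℚ) * g 1 a = ((e a : ℕ) : ℚ)^2/2 →
      (Q₀.count a = 1 ∧ Q.count a = 2 ∧ a = 2) := by
    intro a ha hea heq
    have hne' : Q.count a ≠ Q₀.count a := by
      intro h
      apply hea
      rw [he]
      simp only [h, Nat.sub_self]
    by_contra hcon
    exact absurd heq (ne_of_lt ((key_combined (Q.count a) (Q₀.count a) a (haS2 a ha)
      (hc01 a) (hcount_le a) (hmemS2 a ha)).2 hne' hcon))
  -- case E = 0 : Q = Qc, contradiction
  rcases Nat.eq_zero_or_pos E with hE0 | hEpos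
  · exfalso
    apply hne
    have hsum0 : ∑ a ∈ S2, e a = 0 := by rw [← hE]; exact hE0
    have he0 : ∀ a ∈ S2, e a = 0 := fun a ha => Finset.sum_eq_zero_iff.1 hsum0 a ha
    apply Multiset.ext.2
    intro b
    rw [hcQc b]
    by_cases hb1 : b = 1
    · subst hb1
      rw [if_pos rfl, Multiset.count_eq_zero.2 h1Q0, zero_add]
      omega
    · rw [if_neg hb1, add_zero]
      by_cases hbQ : b ∈ Q.toFinset
      · have hbS2 : b ∈ S2 := Finset.mem_erase.2 ⟨hb1, hbQ⟩
        have := he0 b hbS2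
        rw [he] at this
        simp only at this
        have hble := Nat.mul_le_mul_right b (hcount_le b)
        have hb2 := haS2 b hbS2
        have : Q.count b * b = Q₀.count b * b := by omega
        exact Nat.eq_of_mul_eq_mul_right (by omega) this
      · rw [Multiset.count_eq_zero.2 (fun hm => hbQ (Multiset.mem_toFinset.2 hm)),
          Multiset.count_eq_zero.2 (fun hm => hbQ (Multiset.mem_toFinset.2
            (Multiset.mem_of_le hsub hm)))]
  -- E > 0
  have hsum_sq : (∑ a ∈ S2, ((e a : ℕ):ℚ)^2/2) ≤ ((E:ℚ))^2/2 := by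
    rw [← Finset.sum_div]
    have hn : ∑ a ∈ S2, (e a)^2 ≤ E^2 := by rw [hE]; exact nat_sum_sq_le S2 e
    have : ((∑ a ∈ S2, (e a)^2 : ℕ) : ℚ) ≤ ((E^2 : ℕ) : ℚ) := by exact_mod_cast hn
    push_cast at this ⊢
    linarith
  by_cases hstrict : ∃ a ∈ S2, g (Q.count a) a - (Q₀.count a:ℚ) * g 1 a < ((e a : ℕ):ℚ)^2/2
  · obtain ⟨a₀, ha₀, hlt⟩ := hstrict
    have h1 : ∑ a ∈ S2, (g (Q.count a) a - (Q₀.count a:ℚ) * g 1 a)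
        < ∑ a ∈ S2, ((e a : ℕ):ℚ)^2/2 :=
      Finset.sum_lt_sum hkey_le ⟨a₀, ha₀, hlt⟩
    have h2' : ((E:ℚ))^2/2 ≤ (r:ℚ)^2/2 - (r₁:ℚ)^2/2 := by
      have : (r:ℚ) = (E:ℚ) + (r₁:ℚ) := by exact_mod_cast hrE
      rw [this]
      have h1' : (0:ℚ) ≤ (E:ℚ) := by positivity
      have h2'' : (0:ℚ) ≤ (r₁:ℚ) := by positivity
      nlinarith
    linarith
  · push_neg at hstrict
    have heqs : ∀ a ∈ S2, g (Q.count a) a - (Q₀.count a:ℚ) * g 1 a = ((e a : ℕ):ℚ)^2/2 :=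
      fun a ha => le_antisymm (hkey_le a ha) (hstrict a ha)
    -- find the element with e ≠ 0; it must be a = 2
    have ha2 : ∀ a ∈ S2, e a ≠ 0 → a = 2 :=
      fun a ha hea => (hkey_char a ha hea (heqs a ha)).2.2
    obtain ⟨a₀, ha₀, hea₀⟩ : ∃ a ∈ S2, e a ≠ 0 := by
      by_contra hcon
      push_neg at hcon
      rw [hE, Finset.sum_eq_zero hcon] at hEpos
      omega
    have ha₀2 : a₀ = 2 := ha2 a₀ ha₀ hea₀
    subst ha₀2
    obtain ⟨hc2, hm2, -⟩ := hkey_char 2 ha₀ hea₀ (heqs 2 ha₀)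
    have hE2 : E = 2 := by
      rw [hE, Finset.sum_eq_single_of_mem 2 ha₀ (fun b hb hbne => by
        by_contra hbe
        exact hbne (ha2 b hb hbe))]
      show Multiset.count 2 Q * 2 - Multiset.count 2 Q₀ * 2 = 2
      rw [hm2, hc2]
    have h2Q0 : 2 ∈ Q₀ := by
      have hc2' : 0 < Multiset.count 2 Q₀ := by omega
      exact Multiset.count_pos.1 hc2'
    have hrne2 : r ≠ 2 := by
      rcases hside with h | h
      · exact h
      · exact absurd h2Q0 h
    have hr₁pos : 1 ≤ r₁ := by omega
    have hsum_le : ∑ a ∈ S2, (g (Q.count a) a - (Q₀.count a:ℚ) * g 1 a)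
        ≤ ((E:ℚ))^2/2 := by
      calc ∑ a ∈ S2, (g (Q.count a) a - (Q₀.count a:ℚ) * g 1 a)
          = ∑ a ∈ S2, ((e a : ℕ):ℚ)^2/2 := Finset.sum_congr rfl heqs
        _ ≤ ((E:ℚ))^2/2 := hsum_sq
    have : ((E:ℚ))^2/2 = 2 := by rw [hE2]; norm_num
    have hrr : (r:ℚ)^2/2 - (r₁:ℚ)^2/2 ≥ 4 := by
      have hcast : (r:ℚ) = (r₁:ℚ) + 2 := by
        have h' : r = r₁ + 2 := by omega
        exact_mod_cast h'
      rw [hcast]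
      have : (1:ℚ) ≤ (r₁:ℚ) := by exact_mod_cast hr₁pos
      nlinarith
    linarith
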